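/- arXiv:1711.10843 — 3 statements merged into one kernel-verified Lean document; each statement's English description precedes it below -/
import Mathlib

section
/- Tartar's function f(x) = ((3/x³)(sin x - x cos x))² satisfies f(x) ≤ 1 for all x > 0. -/
open Real


lemma key_abs (x : ℝ) (hx : 0 ≤ x) :
    |Real.sin x - x * Real.cos x| ≤ x ^ 3 / 3 := by
  have habs : ∀ t : ℝ, 0 ≤ t → |Real.sin t| ≤ t := by
    intro t ht
    simpa [abs_of_nonneg ht] using Real.abs_sin_le_abs (x := t)
  have mono : ∀ ε : ℝ, ε = 1 ∨ ε = -1 →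
      MonotoneOn (fun t : ℝ => t ^ 3 / 3 - ε * (Real.sin t - t * Real.cos t)) (Set.Ici 0) := by
    intro ε hε
    have hderiv : ∀ t : ℝ, HasDerivAt (fun t : ℝ => t ^ 3 / 3 - ε * (Real.sin t - t * Real.cos t))
        (t ^ 2 - ε * (t * Real.sin t)) t := by
      intro t
      have h1 : HasDerivAt (fun t : ℝ => t ^ 3 / 3) (t ^ 2) t := by
        have := (hasDerivAt_pow 3 t).div_const 3
        simpa [mul_comm, mul_div_assoc] using this
      have h2 : HasDerivAt (fun t : ℝ => Real.sin t - t * Real.cos t) (t * Real.sin t) t := by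
        have hs := Real.hasDerivAt_sin t
        have hc : HasDerivAt (fun t : ℝ => t * Real.cos t) (1 * Real.cos t + t * (-Real.sin t)) t :=
          (hasDerivAt_id t).mul (Real.hasDerivAt_cos t)
        have := hs.sub hc
        exact this.congr_deriv (by ring)
      exact h1.sub ((h2.const_mul ε))
    apply monotoneOn_of_deriv_nonneg (convex_Ici 0)
    · exact Continuous.continuousOn (by continuity)
    · intro t ht
      exact (hderiv t).differentiableAt.differentiableWithinAt
    · intro t ht
      simp only [interior_Ici, Set.mem_Ioi] at ht
      rw [(hderiv t).deriv]
      have hst : |Real.sin t| ≤ t := habs t ht.le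
      rcases hε with rfl | rfl
      · have : t * Real.sin t ≤ t * t := by
          apply mul_le_mul_of_nonneg_left _ ht.le
          exact le_trans (le_abs_self _) hst
        nlinarith
      · have : -(t * t) ≤ t * Real.sin t := by
          have : -t ≤ Real.sin t := by
            have := neg_abs_le (Real.sin t); linarith
          nlinarith
        nlinarith
  have hval : ∀ ε : ℝ, ε = 1 ∨ ε = -1 → ε * (Real.sin x - x * Real.cos x) ≤ x ^ 3 / 3 := by
    intro ε hε
    have := (mono ε hε) (Set.self_mem_Ici) (Set.mem_Ici.2 hx) hx
    simp at this
    linarith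
  rw [abs_le]
  constructor
  · have := hval (-1) (Or.inr rfl); linarith
  · have := hval 1 (Or.inl rfl); linarith

theorem stmt_2 (x : ℝ) (hx : 0 < x) :
    ((3 / x ^ 3) * (Real.sin x - x * Real.cos x)) ^ 2 ≤ 1 := by
  have hk := key_abs x hx.le
  have hx3 : 0 < x ^ 3 := by positivity
  rw [sq_le_one_iff_abs_le_one, abs_mul, abs_of_pos (by positivity : (0:ℝ) < 3 / x ^ 3)]
  calc 3 / x ^ 3 * |Real.sin x - x * Real.cos x| ≤ 3 / x ^ 3 * (x ^ 3 / 3) := by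
        exact mul_le_mul_of_nonneg_left hk (by positivity)
    _ = 1 := by field_simp
end

section
/- Let α be an algebraic integer of degree n with conjugates α₁,…,αₙ satisfying Σᵢ |αᵢ|² ≤ T and Σᵢ αᵢ = S₁ ∈ ℝ. If p is the minimal polynomial of α, then |p(1)| ≤ ((T - 2S₁)/n + 1)^{n/2} and |p(-1)| ≤ ((T + 2S₁)/n + 1)^{n/2}. -/
open Polynomial

open Finset in
lemma aux_amgm {n : ℕ} (hn : 1 ≤ n) (a : Fin n → ℝ) (ha : ∀ i, 0 ≤ a i) (B : ℝ)
    (hB : ∑ i, a i ^ 2 ≤ n * B) : ∏ i, a i ≤ B ^ ((n : ℝ) / 2) := by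
  have hn0 : (0:ℝ) < n := by exact_mod_cast hn
  have hB0 : 0 ≤ B := by
    have h1 : (0:ℝ) ≤ ∑ i, a i ^ 2 := Finset.sum_nonneg fun i _ => sq_nonneg _
    nlinarith
  have hgm := Real.geom_mean_le_arith_mean_weighted Finset.univ (fun _ => (n:ℝ)⁻¹)
    (fun i => a i ^ 2) (fun i _ => by positivity)
    (by simp [Finset.card_univ]; field_simp) (fun i _ => sq_nonneg _)
  have h2 : ∏ i, (a i ^ 2) ^ ((n:ℝ)⁻¹) ≤ B := by
    refine hgm.trans ?_
    rw [← Finset.mul_sum]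
    rw [inv_mul_le_iff₀ hn0]
    linarith [hB]
  have h3 : (∏ i, (a i ^ 2) ^ ((n:ℝ)⁻¹)) ^ ((n:ℝ)/2) ≤ B ^ ((n:ℝ)/2) :=
    Real.rpow_le_rpow (Finset.prod_nonneg fun i _ => Real.rpow_nonneg (sq_nonneg _) _) h2
      (by positivity)
  refine le_trans (le_of_eq ?_) h3
  rw [← Real.finset_prod_rpow _ _ (fun i _ => Real.rpow_nonneg (sq_nonneg _) _)]
  refine Finset.prod_congr rfl fun i _ => ?_
  rw [← Real.rpow_natCast (a i) 2, ← Real.rpow_mul (ha i), ← Real.rpow_mul (ha i)]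
  have he : ((2:ℕ):ℝ) * (↑n)⁻¹ * ((n:ℝ)/2) = 1 := by field_simp; norm_num
  rw [he, Real.rpow_one]

theorem stmt_9 (α : ℂ) (hint : IsIntegral ℤ α) (n : ℕ) (hn : 1 ≤ n)
    (hdeg : (minpoly ℚ α).natDegree = n) (conj : Fin n → ℂ)
    (hconj : (minpoly ℚ α).map (algebraMap ℚ ℂ) = ∏ i : Fin n, (X - C (conj i)))
    (T : ℝ) (hT : ∑ i : Fin n, ‖conj i‖ ^ 2 ≤ T)
    (S₁ : ℝ) (hS : (∑ i : Fin n, conj i) = (S₁ : ℂ)) :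
    ‖((minpoly ℚ α).map (algebraMap ℚ ℂ)).eval 1‖ ≤
        ((T - 2 * S₁) / n + 1) ^ ((n : ℝ) / 2) ∧
      ‖((minpoly ℚ α).map (algebraMap ℚ ℂ)).eval (-1)‖ ≤
        ((T + 2 * S₁) / n + 1) ^ ((n : ℝ) / 2) := by
  have hn0 : (0:ℝ) < n := by exact_mod_cast hn
  have hre : ∑ i, (conj i).re = S₁ := by
    have := congrArg Complex.re hS
    simpa using this
  constructor
  · have heval : ‖((minpoly ℚ α).map (algebraMap ℚ ℂ)).eval 1‖
        = ∏ i, ‖1 - conj i‖ := by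
      rw [hconj, eval_prod, norm_prod]
      simp
    rw [heval]
    refine aux_amgm hn _ (fun i => norm_nonneg _) _ ?_
    have hsq : ∀ i, ‖1 - conj i‖^2 = 1 - 2*(conj i).re + ‖conj i‖^2 := by
      intro i
      rw [Complex.sq_norm, Complex.sq_norm, Complex.normSq_apply, Complex.normSq_apply]
      simp [Complex.sub_re, Complex.sub_im]
      ring
    calc ∑ i, ‖1 - conj i‖^2
        = ∑ i, (1 - 2*(conj i).re + ‖conj i‖^2) := by simp [hsq]
      _ = n - 2*S₁ + ∑ i, ‖conj i‖^2 := by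
          rw [Finset.sum_add_distrib, Finset.sum_sub_distrib, ← Finset.mul_sum, hre]
          simp
      _ ≤ (n:ℝ)*((T - 2*S₁)/n + 1) := by
          have : (n:ℝ)*((T - 2*S₁)/n + 1) = T - 2*S₁ + n := by field_simp
          rw [this]; linarith
  · have heval : ‖((minpoly ℚ α).map (algebraMap ℚ ℂ)).eval (-1)‖
        = ∏ i, ‖-1 - conj i‖ := by
      rw [hconj, eval_prod, norm_prod]
      simp
    rw [heval]
    refine aux_amgm hn _ (fun i => norm_nonneg _) _ ?_
    have hsq : ∀ i, ‖-1 - conj i‖^2 = 1 + 2*(conj i).re + ‖conj i‖^2 := by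
      intro i
      rw [Complex.sq_norm, Complex.sq_norm, Complex.normSq_apply, Complex.normSq_apply]
      simp [Complex.sub_re, Complex.sub_im]
      ring
    calc ∑ i, ‖-1 - conj i‖^2
        = ∑ i, (1 + 2*(conj i).re + ‖conj i‖^2) := by simp [hsq]
      _ = n + 2*S₁ + ∑ i, ‖conj i‖^2 := by
          rw [Finset.sum_add_distrib, Finset.sum_add_distrib, ← Finset.mul_sum, hre]
          simp
      _ ≤ (n:ℝ)*((T + 2*S₁)/n + 1) := by
          have : (n:ℝ)*((T + 2*S₁)/n + 1) = T + 2*S₁ + n := by field_simp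
          rw [this]; linarith
end

section
/- (Pohst) Fix n ≥ 1, T > 0, N > 0 with N ≤ (T/n)^{n/2}, and m ∈ ℤ \ {0, 2}. Any point (y₁,…,yₙ) at which T_m(x) = Σᵢ xᵢ^m attains its maximum on the set {x ∈ ℝⁿ : Σᵢ xᵢ² ≤ T, ∏ᵢ xᵢ = N, xᵢ > 0} has at most two distinct coordinate values. -/
open Filter Topology

lemma pohst_core (m : ℤ) (hm : m ≠ 0) (hm2 : m ≠ 2) (k l u : ℝ) (hlu : ¬(l = 0 ∧ u = 0))
    {a b c : ℝ} (ha : 0 < a) (hab : a < b) (hbc : b < c)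
    (h1 : k + l * a ^ 2 + u * a ^ m = 0) (h2 : k + l * b ^ 2 + u * b ^ m = 0)
    (h3 : k + l * c ^ 2 + u * c ^ m = 0) : False := by
  set φ : ℝ → ℝ := fun t => k + l * t ^ 2 + u * t ^ m with hφ
  have hd : ∀ t : ℝ, 0 < t →
      HasDerivAt φ (l * (2 * t) + u * ((m : ℝ) * t ^ (m - 1))) t := by
    intro t ht
    have h1 : HasDerivAt (fun x : ℝ => x ^ 2) (2 * t) t := by
      simpa using hasDerivAt_pow 2 t
    have h2 : HasDerivAt (fun x : ℝ => x ^ m) ((m : ℝ) * t ^ (m - 1)) t :=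
      hasDerivAt_zpow m t (Or.inl ht.ne')
    have := ((h1.const_mul l).add (h2.const_mul u)).const_add k
    exact this.congr_of_eventuallyEq (Filter.Eventually.of_forall fun x => by simp [hφ]; ring)
  have hb : 0 < b := ha.trans hab
  have hc : 0 < c := hb.trans hbc
  have key : ∀ t : ℝ, 0 < t → l * (2 * t) + u * ((m : ℝ) * t ^ (m - 1)) = 0 →
      2 * l + u * (m : ℝ) * t ^ (m - 2) = 0 := by
    intro t ht h
    have htm : t ^ (m - 1) = t * t ^ (m - 2) := by
      rw [← zpow_one_add₀ ht.ne']; ring_nf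
    have : t * (2 * l + u * (m : ℝ) * t ^ (m - 2)) = 0 := by
      rw [← h, htm]; ring
    rcases mul_eq_zero.1 this with h' | h'
    · exact absurd h' ht.ne'
    · exact h'
  -- Rolle on [a,b] and [b,c]
  have cont : ∀ x y : ℝ, 0 < x → ContinuousOn φ (Set.Icc x y) := by
    intro x y hx
    intro t ht
    exact ((hd t (lt_of_lt_of_le hx ht.1)).continuousAt).continuousWithinAt
  obtain ⟨t₁, ht₁, hd₁⟩ := exists_hasDerivAt_eq_zero hab (cont a b ha) (by show φ a = φ b; rw [show φ a = 0 from h1, show φ b = 0 from h2]) (fun t ht => hd t (ha.trans ht.1))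
  obtain ⟨t₂, ht₂, hd₂⟩ := exists_hasDerivAt_eq_zero hbc (cont b c hb) (by show φ b = φ c; rw [show φ b = 0 from h2, show φ c = 0 from h3]) (fun t ht => hd t (hb.trans ht.1))
  have ht₁0 : 0 < t₁ := ha.trans ht₁.1
  have ht₂0 : 0 < t₂ := hb.trans ht₂.1
  have e₁ := key t₁ ht₁0 hd₁
  have e₂ := key t₂ ht₂0 hd₂
  by_cases hu : u = 0
  · have hl : l ≠ 0 := fun h => hlu ⟨h, hu⟩
    rw [hu] at e₁; simp at e₁
    exact hl (by linarith)
  · have hum : u * (m : ℝ) ≠ 0 := mul_ne_zero hu (Int.cast_ne_zero.2 hm)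
    have hne : t₁ ^ (m - 2) = t₂ ^ (m - 2) := by
      have : u * (m : ℝ) * t₁ ^ (m - 2) = u * (m : ℝ) * t₂ ^ (m - 2) := by linarith
      exact mul_left_cancel₀ hum this
    have hr : (1 : ℝ) < t₂ / t₁ := (one_lt_div ht₁0).2 (ht₁.2.trans ht₂.1)
    have : (t₂ / t₁) ^ (m - 2) = (t₂ / t₁) ^ (0 : ℤ) := by
      rw [div_zpow, ← hne, div_self (zpow_ne_zero _ ht₁0.ne'), zpow_zero]
    have := zpow_right_injective₀ (by positivity) hr.ne' this
    omega

lemma pohst_core' (m : ℤ) (hm : m ≠ 0) (hm2 : m ≠ 2) (k l u : ℝ)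
    (hklu : ¬(k = 0 ∧ l = 0 ∧ u = 0))
    {a b c : ℝ} (ha : 0 < a) (hb : 0 < b) (hc : 0 < c)
    (hab : a ≠ b) (hac : a ≠ c) (hbc : b ≠ c)
    (h1 : k + l * a ^ 2 + u * a ^ m = 0) (h2 : k + l * b ^ 2 + u * b ^ m = 0)
    (h3 : k + l * c ^ 2 + u * c ^ m = 0) : False := by
  have hlu : ¬(l = 0 ∧ u = 0) := by
    rintro ⟨rfl, rfl⟩
    simp at h1
    exact hklu ⟨h1, rfl, rfl⟩
  rcases hab.lt_or_gt with h | h <;> rcases hac.lt_or_gt with h' | h' <;>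
    rcases hbc.lt_or_gt with h'' | h''
  · exact pohst_core m hm hm2 k l u hlu ha h h'' h1 h2 h3
  · exact pohst_core m hm hm2 k l u hlu ha h' h'' h1 h3 h2
  · linarith
  · exact pohst_core m hm hm2 k l u hlu hc h' h h3 h1 h2
  · exact pohst_core m hm hm2 k l u hlu hb h h' h2 h1 h3
  · linarith
  · exact pohst_core m hm hm2 k l u hlu hb h'' h' h2 h3 h1
  · exact pohst_core m hm hm2 k l u hlu hc h'' h h3 h2 h1

lemma pohst_solve (m : ℤ) (hm : m ≠ 0) (hm2 : m ≠ 2)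
    {a b c : ℝ} (ha : 0 < a) (hb : 0 < b) (hc : 0 < c)
    (hab : a ≠ b) (hac : a ≠ c) (hbc : b ≠ c) :
    ∃ α β γ : ℝ, α + β + γ = 0 ∧ α * a ^ 2 + β * b ^ 2 + γ * c ^ 2 = -1 ∧
      α * a ^ m + β * b ^ m + γ * c ^ m = 1 / m := by
  set M : Matrix (Fin 3) (Fin 3) ℝ :=
    !![1, a ^ 2, a ^ m; 1, b ^ 2, b ^ m; 1, c ^ 2, c ^ m] with hM
  have hdet : M.det ≠ 0 := by
    intro hdet
    obtain ⟨w, hw0, hw⟩ := (Matrix.exists_mulVec_eq_zero_iff.2 hdet)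
    have e : ∀ i, (M.mulVec w) i = 0 := fun i => by rw [hw]; rfl
    have e0 := e 0; have e1 := e 1; have e2 := e 2
    simp [hM, Matrix.mulVec, dotProduct, Fin.sum_univ_three] at e0 e1 e2
    refine pohst_core' m hm hm2 (w 0) (w 1) (w 2) ?_ ha hb hc hab hac hbc
      (by linarith) (by linarith) (by linarith)
    rintro ⟨h0, h1, h2⟩
    apply hw0
    ext i
    fin_cases i <;> simp [h0, h1, h2]
  have hu : IsUnit M.det := hdet.isUnit
  set v : Fin 3 → ℝ := Matrix.vecMul ![0, -1, 1 / (m : ℝ)] M⁻¹ with hv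
  have hvM : Matrix.vecMul v M = ![0, -1, 1 / (m : ℝ)] := by
    rw [hv, Matrix.vecMul_vecMul, Matrix.nonsing_inv_mul M hu, Matrix.vecMul_one]
  refine ⟨v 0, v 1, v 2, ?_, ?_, ?_⟩
  · have := congrFun hvM 0
    simpa [hM, Matrix.vecMul, dotProduct, Fin.sum_univ_three] using this
  · have := congrFun hvM 1
    simpa [hM, Matrix.vecMul, dotProduct, Fin.sum_univ_three] using this
  · have := congrFun hvM 2
    simpa [hM, Matrix.vecMul, dotProduct, Fin.sum_univ_three] using this

lemma exp_zpow' (x : ℝ) (m : ℤ) : Real.exp x ^ m = Real.exp (m * x) := by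
  rw [← Real.rpow_intCast, Real.rpow_def_of_pos (Real.exp_pos x), Real.log_exp, mul_comm]

theorem stmt_12 (n : ℕ) (hn : 1 ≤ n) (T N : ℝ) (hT : 0 < T) (hN : 0 < N)
    (hNT : N ≤ (T / n) ^ ((n : ℝ) / 2)) (m : ℤ) (hm : m ≠ 0) (hm2 : m ≠ 2)
    (y : Fin n → ℝ)
    (hyC : (∑ i, y i ^ 2 ≤ T) ∧ (∏ i, y i = N) ∧ ∀ i, 0 < y i)
    (hmax : ∀ x : Fin n → ℝ,
      (∑ i, x i ^ 2 ≤ T) → (∏ i, x i = N) → (∀ i, 0 < x i) →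
      (∑ i, x i ^ m) ≤ ∑ i, y i ^ m) :
    Set.ncard (Set.range y) ≤ 2 := by
  obtain ⟨hsq, hprod, hpos⟩ := hyC
  by_contra hcon
  push_neg at hcon
  obtain ⟨a, ⟨p, hp⟩, b, ⟨q, hq⟩, c, ⟨r, hr⟩, hab, hac, hbc⟩ :=
    (Set.two_lt_ncard (Set.finite_range y)).1 hcon
  subst hp; subst hq; subst hr
  have hpq : p ≠ q := fun h => hab (by rw [h])
  have hpr : p ≠ r := fun h => hac (by rw [h])
  have hqr : q ≠ r := fun h => hbc (by rw [h])
  obtain ⟨α, β, γ, hsum0, hdot2, hdotm⟩ :=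
    pohst_solve m hm hm2 (hpos p) (hpos q) (hpos r) hab hac hbc
  set v : Fin n → ℝ := fun i =>
    (if i = p then α else 0) + (if i = q then β else 0) + (if i = r then γ else 0) with hv
  have hsumv : ∑ i, v i = 0 := by
    simp only [hv, Finset.sum_add_distrib, Finset.sum_ite_eq', Finset.mem_univ, if_pos]
    exact hsum0
  have hdv2 : ∑ i, v i * y i ^ 2 = -1 := by
    simp only [hv, add_mul, ite_mul, zero_mul, Finset.sum_add_distrib,
      Finset.sum_ite_eq', Finset.mem_univ, if_pos]
    exact hdot2
  have hdvm : ∑ i, v i * y i ^ m = 1 / m := by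
    simp only [hv, add_mul, ite_mul, zero_mul, Finset.sum_add_distrib,
      Finset.sum_ite_eq', Finset.mem_univ, if_pos]
    exact hdotm
  -- the perturbation curves
  set g : ℝ → ℝ := fun s => ∑ i, y i ^ 2 * Real.exp (2 * v i * s) with hg
  set h : ℝ → ℝ := fun s => ∑ i, y i ^ m * Real.exp ((m : ℝ) * v i * s) with hh
  have hg0 : g 0 = ∑ i, y i ^ 2 := by simp [hg]
  have hh0 : h 0 = ∑ i, y i ^ m := by simp [hh]
  have hgd : HasDerivAt g (-2) 0 := by
    have : ∀ i ∈ Finset.univ, HasDerivAt (fun s => y i ^ 2 * Real.exp (2 * v i * s))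
        (y i ^ 2 * (2 * v i)) (0 : ℝ) := by
      intro i _
      have h1 : HasDerivAt (fun s : ℝ => 2 * v i * s) (2 * v i) 0 := by
        simpa using (hasDerivAt_id (0:ℝ)).const_mul (2 * v i)
      simpa using (h1.exp.const_mul (y i ^ 2))
    have := HasDerivAt.sum this
    refine (this.congr_of_eventuallyEq (Filter.Eventually.of_forall fun s => by simp [hg, Finset.sum_apply])).congr_deriv ?_
    have : ∑ i, y i ^ 2 * (2 * v i) = 2 * ∑ i, v i * y i ^ 2 := by
      rw [Finset.mul_sum]; exact Finset.sum_congr rfl fun i _ => by ring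
    rw [this, hdv2]; norm_num
  have hhd : HasDerivAt h 1 0 := by
    have : ∀ i ∈ Finset.univ, HasDerivAt (fun s => y i ^ m * Real.exp ((m : ℝ) * v i * s))
        (y i ^ m * ((m : ℝ) * v i)) (0 : ℝ) := by
      intro i _
      have h1 : HasDerivAt (fun s : ℝ => (m : ℝ) * v i * s) ((m : ℝ) * v i) 0 := by
        simpa using (hasDerivAt_id (0:ℝ)).const_mul ((m : ℝ) * v i)
      simpa using (h1.exp.const_mul (y i ^ m))
    have := HasDerivAt.sum this
    refine (this.congr_of_eventuallyEq (Filter.Eventually.of_forall fun s => by simp [hh, Finset.sum_apply])).congr_deriv ?_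
    have : ∑ i, y i ^ m * ((m : ℝ) * v i) = (m : ℝ) * ∑ i, v i * y i ^ m := by
      rw [Finset.mul_sum]; exact Finset.sum_congr rfl fun i _ => by ring
    rw [this, hdvm]
    field_simp
  -- find small positive s with g s < g 0 and h s > h 0
  have hmono : 𝓝[>] (0:ℝ) ≤ 𝓝[≠] (0:ℝ) :=
    nhdsWithin_mono 0 fun x hx => ne_of_gt hx
  have hgs : ∀ᶠ s in 𝓝[>] (0:ℝ), slope g 0 s < 0 :=
    ((hasDerivAt_iff_tendsto_slope.1 hgd).mono_left hmono).eventually_lt_const (by norm_num)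
  have hhs : ∀ᶠ s in 𝓝[>] (0:ℝ), 0 < slope h 0 s :=
    ((hasDerivAt_iff_tendsto_slope.1 hhd).mono_left hmono).eventually_const_lt (by norm_num)
  obtain ⟨s, hs1, hs2, hs0⟩ := (hgs.and (hhs.and self_mem_nhdsWithin)).exists
  rw [slope_def_field] at hs1 hs2
  have hgls : g s < g 0 := by
    have := (div_neg_iff.1 (by simpa using hs1))
    rcases this with ⟨h1, h2⟩ | ⟨h1, h2⟩ <;> [skip; linarith]
    · linarith
  have hhgs : h 0 < h s := by
    have := (div_pos_iff.1 (by simpa using hs2))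
    rcases this with ⟨h1, h2⟩ | ⟨h1, h2⟩ <;> [skip; linarith]
    · linarith
  -- the competitor point
  set x : Fin n → ℝ := fun i => y i * Real.exp (v i * s) with hx
  have hxpos : ∀ i, 0 < x i := fun i => mul_pos (hpos i) (Real.exp_pos _)
  have hxsq : ∑ i, x i ^ 2 = g s := by
    refine Finset.sum_congr rfl fun i _ => ?_
    show (y i * Real.exp (v i * s)) ^ 2 = y i ^ 2 * Real.exp (2 * v i * s)
    have he : Real.exp (v i * s) ^ 2 = Real.exp (2 * v i * s) := by
      rw [← Real.exp_nat_mul]; congr 1; push_cast; ring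
    rw [mul_pow, he]
  have hxprod : ∏ i, x i = N := by
    rw [hx]
    simp only [Finset.prod_mul_distrib, hprod, ← Real.exp_sum, ← Finset.sum_mul, hsumv]
    simp
  have hxm : ∑ i, x i ^ m = h s := by
    refine Finset.sum_congr rfl fun i _ => ?_
    show (y i * Real.exp (v i * s)) ^ m = y i ^ m * Real.exp ((m : ℝ) * v i * s)
    have he : Real.exp (v i * s) ^ m = Real.exp ((m : ℝ) * v i * s) := by
      rw [exp_zpow']; congr 1; ring
    rw [mul_zpow, he]
  have hle := hmax x (by rw [hxsq]; linarith [hg0 ▸ hgls, hsq]) hxprod hxpos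
  rw [hxm, ← hh0] at hle
  linarith
end
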